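/- Let n ≥ 4 be an integer, M > 0 and λ > 0 satisfy the nondegeneracy condition M² λ^{n-3} < (n-3)^{n-3}/(n-1)^{n-1}, let μ̃(r) = r^{-2} - 2M r^{1-n} - λ and r_p = ((n-1)M)^{1/(n-3)}. Then there exist unique real numbers r_-, r_+ with 0 < r_- < r_p < r_+ such that μ̃(r_-) = μ̃(r_+) = 0; moreover μ̃(r) > 0 for r_- < r < r_+, and μ̃(r) < 0 for 0 < r < r_- and for r > r_+. -/

import Mathlib

noncomputable def mutilde (n : ℕ) (M lam : ℝ) (r : ℝ) : ℝ :=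
  r ^ (-2 : ℝ) - 2 * M * r ^ ((1 : ℝ) - (n : ℝ)) - lam

noncomputable def rpCrit (n : ℕ) (M : ℝ) : ℝ :=
  (((n : ℝ) - 1) * M) ^ ((1 : ℝ) / ((n : ℝ) - 3))

noncomputable def sdsQ (k : ℕ) (M lam r : ℝ) : ℝ := r^(k+1) - lam * r^(k+3) - 2*M

noncomputable def sdsR (k : ℕ) (lam : ℝ) : ℝ :=
  Real.sqrt (((k:ℝ)+1)/(lam*((k:ℝ)+3)))

lemma mutilde_eq_div (k : ℕ) (M lam r : ℝ) (hr : 0 < r) :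
    mutilde (k+4) M lam r = sdsQ k M lam r / r^(k+3) := by
  unfold mutilde sdsQ
  have h1 : ((1:ℝ) - ((k+4 : ℕ):ℝ)) = -((k+3 : ℕ):ℝ) := by push_cast; ring
  have e2 : r ^ (-2:ℝ) = (r^(2:ℕ))⁻¹ := by
    rw [show (-2:ℝ) = -((2:ℕ):ℝ) by norm_num, Real.rpow_neg hr.le, Real.rpow_natCast]
  have e3 : r ^ (-((k+3:ℕ):ℝ)) = (r^(k+3:ℕ))⁻¹ := by
    rw [Real.rpow_neg hr.le, Real.rpow_natCast]
  rw [h1, e2, e3]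
  have hrne : r ≠ 0 := hr.ne'
  field_simp
  ring

lemma sdsQ_hasDerivAt (k : ℕ) (M lam r : ℝ) :
    HasDerivAt (sdsQ k M lam) (((k:ℝ)+1) * r^k - lam*((k:ℝ)+3)*r^(k+2)) r := by
  have h1 := hasDerivAt_pow (k+1) r
  have h2 := (hasDerivAt_pow (k+3) r).const_mul lam
  have h := (h1.sub h2).sub_const (2*M)
  refine h.congr_deriv ?_
  rw [show k+1-1 = k by omega, show k+3-1 = k+2 by omega]
  push_cast
  ring

lemma sdsQ_cont (k : ℕ) (M lam : ℝ) : Continuous (sdsQ k M lam) :=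
  ((continuous_pow (k+1)).sub (continuous_const.mul (continuous_pow (k+3)))).sub
    continuous_const

lemma sdsR_pos (k : ℕ) (lam : ℝ) (hlam : 0 < lam) : 0 < sdsR k lam := by
  apply Real.sqrt_pos.mpr; positivity

lemma sdsR_sq (k : ℕ) (lam : ℝ) (hlam : 0 < lam) :
    (sdsR k lam)^2 = ((k:ℝ)+1)/(lam*((k:ℝ)+3)) := by
  apply Real.sq_sqrt; positivity

lemma sdsQ_strictMonoOn (k : ℕ) (M lam : ℝ) (hlam : 0 < lam) :
    StrictMonoOn (sdsQ k M lam) (Set.Icc 0 (sdsR k lam)) := by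
  apply strictMonoOn_of_deriv_pos (convex_Icc _ _) (sdsQ_cont k M lam).continuousOn
  intro x hx
  rw [interior_Icc] at hx
  rw [(sdsQ_hasDerivAt k M lam x).deriv]
  have hx0 : 0 < x := hx.1
  have hx2 : x^2 < ((k:ℝ)+1)/(lam*((k:ℝ)+3)) := by
    rw [← sdsR_sq k lam hlam]
    exact pow_lt_pow_left₀ hx.2 hx0.le (by norm_num)
  have hd : lam*((k:ℝ)+3)*x^2 < (k:ℝ)+1 := by
    rw [lt_div_iff₀ (by positivity)] at hx2; nlinarith
  have he : ((k:ℝ)+1) * x^k - lam*((k:ℝ)+3)*x^(k+2)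
      = x^k * (((k:ℝ)+1) - lam*((k:ℝ)+3)*x^2) := by ring
  rw [he]
  exact mul_pos (pow_pos hx0 k) (by linarith)

lemma sdsQ_strictAntiOn (k : ℕ) (M lam : ℝ) (hlam : 0 < lam) :
    StrictAntiOn (sdsQ k M lam) (Set.Ici (sdsR k lam)) := by
  apply strictAntiOn_of_deriv_neg (convex_Ici _) (sdsQ_cont k M lam).continuousOn
  intro x hx
  rw [interior_Ici] at hx
  have hx0 : 0 < x := (sdsR_pos k lam hlam).trans hx
  have hx2 : ((k:ℝ)+1)/(lam*((k:ℝ)+3)) < x^2 := by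
    rw [← sdsR_sq k lam hlam]
    exact pow_lt_pow_left₀ hx (Real.sqrt_nonneg _) (by norm_num)
  have hd : (k:ℝ)+1 < lam*((k:ℝ)+3)*x^2 := by
    rw [div_lt_iff₀ (by positivity)] at hx2; nlinarith
  rw [(sdsQ_hasDerivAt k M lam x).deriv]
  have he : ((k:ℝ)+1) * x^k - lam*((k:ℝ)+3)*x^(k+2)
      = x^k * (((k:ℝ)+1) - lam*((k:ℝ)+3)*x^2) := by ring
  rw [he]
  exact mul_neg_of_pos_of_neg (pow_pos hx0 k) (by linarith)

theorem stmt3 (n : ℕ) (hn : 4 ≤ n) (M lam : ℝ) (hM : 0 < M) (hlam : 0 < lam)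
    (hnd : M ^ 2 * lam ^ ((n : ℝ) - 3)
      < ((n : ℝ) - 3) ^ ((n : ℝ) - 3) / ((n : ℝ) - 1) ^ ((n : ℝ) - 1)) :
    ∃ rm rp : ℝ,
      (0 < rm ∧ rm < rpCrit n M ∧ rpCrit n M < rp ∧
        mutilde n M lam rm = 0 ∧ mutilde n M lam rp = 0) ∧
      (∀ r : ℝ, rm < r → r < rp → 0 < mutilde n M lam r) ∧
      (∀ r : ℝ, 0 < r → r < rm → mutilde n M lam r < 0) ∧
      (∀ r : ℝ, rp < r → mutilde n M lam r < 0) ∧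
      (∀ rm' rp' : ℝ,
        (0 < rm' ∧ rm' < rpCrit n M ∧ rpCrit n M < rp' ∧
          mutilde n M lam rm' = 0 ∧ mutilde n M lam rp' = 0) →
        rm' = rm ∧ rp' = rp) := by
  obtain ⟨k, rfl⟩ : ∃ k, n = k + 4 := ⟨n - 4, by omega⟩
  have hrs0 : 0 < sdsR k lam := sdsR_pos k lam hlam
  have hmono := sdsQ_strictMonoOn k M lam hlam
  have hanti := sdsQ_strictAntiOn k M lam hlam
  have hbase : (0:ℝ) < (((k+4 : ℕ):ℝ) - 1) * M := by
    have h : (((k+4 : ℕ):ℝ) - 1) = (k:ℝ)+3 := by push_cast; ring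
    rw [h]; positivity
  have hr0pos : 0 < rpCrit (k+4) M := Real.rpow_pos_of_pos hbase _
  have hr0pow : rpCrit (k+4) M ^ (k+1) = ((k:ℝ)+3) * M := by
    rw [← Real.rpow_natCast (rpCrit (k+4) M) (k+1)]
    unfold rpCrit
    rw [← Real.rpow_mul hbase.le]
    have he : 1 / ((((k+4):ℕ):ℝ) - 3) * (((k+1):ℕ):ℝ) = 1 := by
      have h34 : ((((k+4):ℕ)):ℝ) - 3 = (k:ℝ)+1 := by push_cast; ring
      rw [h34]
      have hne : ((k:ℝ)+1) ≠ 0 := by positivity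
      push_cast
      field_simp
    rw [he, Real.rpow_one]
    push_cast; ring
  have hnd' : M ^ 2 * lam ^ (k+1) < ((k:ℝ)+1)^(k+1) / ((k:ℝ)+3)^(k+3) := by
    have e1 : (((k+4:ℕ):ℝ)) - 3 = ((k+1:ℕ):ℝ) := by push_cast; ring
    have e2 : (((k+4:ℕ):ℝ)) - 1 = ((k+3:ℕ):ℝ) := by push_cast; ring
    rw [e1, e2, Real.rpow_natCast, Real.rpow_natCast, Real.rpow_natCast] at hnd
    push_cast at hnd ⊢
    convert hnd using 3 <;> push_cast <;> ring
  have hQr0 : 0 < sdsQ k M lam (rpCrit (k+4) M) := by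
    have hlt : lam * rpCrit (k+4) M ^(k+3) < ((k:ℝ)+1) * M := by
      apply lt_of_pow_lt_pow_left₀ (k+1) (by positivity)
      have lhs : (lam * rpCrit (k+4) M ^(k+3))^(k+1)
          = lam^(k+1) * (((k:ℝ)+3)*M)^(k+3) := by
        rw [mul_pow, ← pow_mul, show (k+3)*(k+1) = (k+1)*(k+3) by ring, pow_mul, hr0pow]
      rw [lhs, mul_pow ((k:ℝ)+3) M (k+3), mul_pow ((k:ℝ)+1) M (k+1)]
      have h2 := mul_lt_mul_of_pos_right hnd'
        (show (0:ℝ) < ((k:ℝ)+3)^(k+3) * M^(k+1) by positivity)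
      rw [div_mul_eq_mul_div, mul_comm (((k:ℝ)+1)^(k+1)) _] at h2
      rw [show ((k:ℝ)+3)^(k+3) * M^(k+1) * ((k:ℝ)+1)^(k+1) / ((k:ℝ)+3)^(k+3)
          = M^(k+1) * ((k:ℝ)+1)^(k+1) * (((k:ℝ)+3)^(k+3) / ((k:ℝ)+3)^(k+3)) by ring,
        div_self (by positivity : ((k:ℝ)+3)^(k+3) ≠ 0), mul_one] at h2
      calc lam^(k+1) * (((k:ℝ)+3)^(k+3) * M^(k+3))
          = M ^ 2 * lam ^ (k+1) * (((k:ℝ)+3)^(k+3) * M^(k+1)) := by ring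
        _ < M^(k+1) * ((k:ℝ)+1)^(k+1) := h2
        _ = ((k:ℝ)+1)^(k+1) * M^(k+1) := by ring
    have hq : sdsQ k M lam (rpCrit (k+4) M)
        = rpCrit (k+4) M ^(k+1) - lam * rpCrit (k+4) M ^(k+3) - 2*M := rfl
    rw [hq, hr0pow]; linarith
  have hQ0 : sdsQ k M lam 0 = -(2*M) := by unfold sdsQ; simp
  have hQrs : 0 < sdsQ k M lam (sdsR k lam) := by
    rcases le_total (rpCrit (k+4) M) (sdsR k lam) with h | h
    · have := hmono.monotoneOn ⟨hr0pos.le, h⟩ ⟨hrs0.le, le_refl _⟩ h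
      linarith
    · have := hanti.antitoneOn Set.self_mem_Ici (Set.mem_Ici.mpr h) h
      linarith
  obtain ⟨R, hRrs, hQR⟩ : ∃ R, sdsR k lam < R ∧ sdsQ k M lam R < 0 := by
    have hs0 : 0 < Real.sqrt lam := Real.sqrt_pos.mpr hlam
    have hs2 : Real.sqrt lam ^ 2 = lam := Real.sq_sqrt hlam.le
    have h1 : (1:ℝ)/Real.sqrt lam ≤ sdsR k lam + 1/Real.sqrt lam :=
      le_add_of_nonneg_left hrs0.le
    have h2 : ((1:ℝ)/Real.sqrt lam)^2 ≤ (sdsR k lam + 1/Real.sqrt lam)^2 :=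
      pow_le_pow_left₀ (by positivity) h1 2
    have h3 : ((1:ℝ)/Real.sqrt lam)^2 = 1/lam := by rw [div_pow, one_pow, hs2]
    have h4 : 1 ≤ lam * (sdsR k lam + 1/Real.sqrt lam)^2 := by
      rw [h3] at h2
      calc (1:ℝ) = lam * (1/lam) := by field_simp
        _ ≤ lam * (sdsR k lam + 1/Real.sqrt lam)^2 := mul_le_mul_of_nonneg_left h2 hlam.le
    refine ⟨sdsR k lam + 1/Real.sqrt lam, lt_add_of_pos_right _ (by positivity), ?_⟩
    have hRpos : 0 < sdsR k lam + 1/Real.sqrt lam := by positivity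
    have hQRe : sdsQ k M lam (sdsR k lam + 1/Real.sqrt lam)
        = (sdsR k lam + 1/Real.sqrt lam)^(k+1)
          - lam * (sdsR k lam + 1/Real.sqrt lam)^(k+3) - 2*M := rfl
    have hid : (sdsR k lam + 1/Real.sqrt lam)^(k+3)
        = (sdsR k lam + 1/Real.sqrt lam)^(k+1) * (sdsR k lam + 1/Real.sqrt lam)^2 := by ring
    rw [hQRe, hid]
    nlinarith [pow_pos hRpos (k+1)]
  have hcont := sdsQ_cont k M lam
  obtain ⟨rm, hrmmem, hrmz⟩ : ∃ rm ∈ Set.Ioo (0:ℝ) (sdsR k lam), sdsQ k M lam rm = 0 := by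
    have h := intermediate_value_Ioo hrs0.le hcont.continuousOn
      (show (0:ℝ) ∈ Set.Ioo (sdsQ k M lam 0) (sdsQ k M lam (sdsR k lam)) by
        rw [hQ0]; exact ⟨by linarith, hQrs⟩)
    obtain ⟨rm, h1, h2⟩ := h
    exact ⟨rm, h1, h2⟩
  obtain ⟨rp, hrpmem, hrpz⟩ : ∃ rp ∈ Set.Ioo (sdsR k lam) R, sdsQ k M lam rp = 0 := by
    have h := intermediate_value_Ioo' hRrs.le hcont.continuousOn
      (show (0:ℝ) ∈ Set.Ioo (sdsQ k M lam R) (sdsQ k M lam (sdsR k lam)) from ⟨hQR, hQrs⟩)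
    obtain ⟨rp, h1, h2⟩ := h
    exact ⟨rp, h1, h2⟩
  have hrm0 : 0 < rm := hrmmem.1
  have hrmrs : rm < sdsR k lam := hrmmem.2
  have hrsrp : sdsR k lam < rp := hrpmem.1
  have hQpos : ∀ r, rm < r → r < rp → 0 < sdsQ k M lam r := by
    intro r h1 h2
    rcases le_total r (sdsR k lam) with h | h
    · have := hmono ⟨hrm0.le, hrmrs.le⟩ ⟨(hrm0.trans h1).le, h⟩ h1
      rw [hrmz] at this; exact this
    · have := hanti (Set.mem_Ici.mpr h) (Set.mem_Ici.mpr hrsrp.le) h2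
      rw [hrpz] at this; exact this
  have hQneg1 : ∀ r, 0 < r → r < rm → sdsQ k M lam r < 0 := by
    intro r h1 h2
    have := hmono ⟨h1.le, (h2.trans hrmrs).le⟩ ⟨hrm0.le, hrmrs.le⟩ h2
    rw [hrmz] at this; exact this
  have hQneg2 : ∀ r, rp < r → sdsQ k M lam r < 0 := by
    intro r h1
    have := hanti (Set.mem_Ici.mpr hrsrp.le) (Set.mem_Ici.mpr (hrsrp.trans h1).le) h1
    rw [hrpz] at this; exact this
  have hrmr0 : rm < rpCrit (k+4) M := by
    rcases lt_trichotomy rm (rpCrit (k+4) M) with h | h | h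
    · exact h
    · exfalso; rw [← h] at hQr0; linarith [hrmz]
    · exfalso; exact absurd (hQneg1 _ hr0pos h) (by linarith)
  have hr0rp : rpCrit (k+4) M < rp := by
    rcases lt_trichotomy (rpCrit (k+4) M) rp with h | h | h
    · exact h
    · exfalso; rw [h] at hQr0; linarith [hrpz]
    · exfalso; exact absurd (hQneg2 _ h) (by linarith)
  have hmu : ∀ r : ℝ, 0 < r → mutilde (k+4) M lam r = sdsQ k M lam r / r^(k+3) :=
    fun r hr => mutilde_eq_div k M lam r hr
  have hmu_zero : ∀ r : ℝ, 0 < r → (mutilde (k+4) M lam r = 0 ↔ sdsQ k M lam r = 0) := by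
    intro r hr
    rw [hmu r hr, div_eq_zero_iff]
    have h : r^(k+3) ≠ 0 := by positivity
    tauto
  refine ⟨rm, rp, ⟨hrm0, hrmr0, hr0rp, ?_, ?_⟩, ?_, ?_, ?_, ?_⟩
  · exact (hmu_zero rm hrm0).mpr hrmz
  · exact (hmu_zero rp (hrm0.trans (hrmr0.trans hr0rp))).mpr hrpz
  · intro r h1 h2
    have hr : 0 < r := hrm0.trans h1
    rw [hmu r hr]
    exact div_pos (hQpos r h1 h2) (by positivity)
  · intro r h1 h2
    rw [hmu r h1]
    exact div_neg_of_neg_of_pos (hQneg1 r h1 h2) (by positivity)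
  · intro r h1
    have hr : 0 < r := (hrm0.trans (hrmr0.trans hr0rp)).trans h1
    rw [hmu r hr]
    exact div_neg_of_neg_of_pos (hQneg2 r h1) (by positivity)
  · rintro rm' rp' ⟨h1, h2, h3, h4, h5⟩
    have hrp'0 : 0 < rp' := hr0pos.trans h3
    have hQm' : sdsQ k M lam rm' = 0 := (hmu_zero rm' h1).mp h4
    have hQp' : sdsQ k M lam rp' = 0 := (hmu_zero rp' hrp'0).mp h5
    constructor
    · rcases lt_trichotomy rm' rm with h | h | h
      · exact absurd (hQneg1 rm' h1 h) (by rw [hQm']; simp)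
      · exact h
      · exact absurd (hQpos rm' h (h2.trans hr0rp)) (by rw [hQm']; simp)
    · rcases lt_trichotomy rp' rp with h | h | h
      · exact absurd (hQpos rp' (hrmr0.trans h3) h) (by rw [hQp']; simp)
      · exact h
      · exact absurd (hQneg2 rp' h) (by rw [hQp']; simp)
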